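/- arXiv:1101.2182 — 4 statements merged into one kernel-verified Lean document; each statement's English description precedes it below -/
import Mathlib

section
/- Let ψ : ℕ → ℝ≥0 be such that the series Σ_{q=1}^∞ (√q · ψ(q))^K converges. Then for almost every h ∈ ℝ^K there exists a constant c > 0 such that for all q ∈ ℕ, max over k ∈ {1,...,K} of the distance from h_k to the set {a/√q : a ∈ ℤ} is at least c · ψ(q). -/
open MeasureTheory
open scoped ENNReal

lemma coord_bound (q : ℕ) (hq : 0 < q) (δ : ℝ) (m : ℤ) :
    volume ({x : ℝ | ∃ a : ℤ, |x - (a : ℝ) / Real.sqrt q| < δ} ∩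
      Set.Ico (m : ℝ) ((m : ℝ) + 1)) ≤ ENNReal.ofReal (6 * δ * Real.sqrt q) := by
  have hq1 : (1:ℝ) ≤ Real.sqrt q := by
    rw [show (1:ℝ) = Real.sqrt 1 by simp]
    exact Real.sqrt_le_sqrt (by exact_mod_cast hq)
  have hq0 : (0:ℝ) < Real.sqrt q := lt_of_lt_of_le one_pos hq1
  rcases le_or_gt δ 0 with hδ | hδ
  · have hempty : {x : ℝ | ∃ a : ℤ, |x - (a : ℝ) / Real.sqrt q| < δ} = ∅ := by
      ext x
      simp only [Set.mem_setOf_eq, Set.mem_empty_iff_false, iff_false, not_exists]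
      intro a ha
      exact absurd ha (not_lt.2 (le_trans hδ (abs_nonneg _)))
    rw [hempty, Set.empty_inter, measure_empty]
    exact zero_le
  rcases le_or_gt 1 (2 * δ * Real.sqrt q) with hbig | hsmall
  · refine le_trans (measure_mono Set.inter_subset_right) ?_
    rw [Real.volume_Ico, show (m:ℝ) + 1 - m = 1 by ring]
    exact ENNReal.ofReal_le_ofReal (by nlinarith)
  · set N := Real.sqrt q with hN
    set lo : ℤ := ⌈((m:ℝ) - δ) * N⌉ with hlo
    set hi : ℤ := ⌊((m:ℝ) + 1 + δ) * N⌋ with hhi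
    have hsub : {x : ℝ | ∃ a : ℤ, |x - (a : ℝ) / N| < δ} ∩ Set.Ico (m:ℝ) ((m:ℝ)+1)
        ⊆ ⋃ a ∈ Finset.Icc lo hi, Set.Ioo ((a:ℝ)/N - δ) ((a:ℝ)/N + δ) := by
      rintro x ⟨⟨a, ha⟩, hx1, hx2⟩
      obtain ⟨h1, h2⟩ := abs_lt.1 ha
      have hmem : a ∈ Finset.Icc lo hi := by
        rw [Finset.mem_Icc]
        constructor
        · apply Int.ceil_le.2
          rw [← le_div_iff₀ hq0]
          linarith
        · apply Int.le_floor.2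
          rw [← div_le_iff₀ hq0]
          linarith
      exact Set.mem_biUnion hmem ⟨by linarith, by linarith⟩
    refine le_trans (measure_mono hsub) ?_
    refine le_trans (measure_biUnion_finset_le _ _) ?_
    have hvol : ∀ a : ℤ, volume (Set.Ioo ((a:ℝ)/N - δ) ((a:ℝ)/N + δ)) = ENNReal.ofReal (2*δ) := by
      intro a
      rw [Real.volume_Ioo]
      congr 1
      ring
    calc ∑ a ∈ Finset.Icc lo hi, volume (Set.Ioo ((a:ℝ)/N - δ) ((a:ℝ)/N + δ))
        = (Finset.Icc lo hi).card * ENNReal.ofReal (2*δ) := by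
          rw [Finset.sum_congr rfl fun a _ => hvol a, Finset.sum_const, nsmul_eq_mul]
      _ ≤ ENNReal.ofReal (3 * N) * ENNReal.ofReal (2*δ) := by
          gcongr
          have hcard : ((Finset.Icc lo hi).card : ℝ) ≤ 3 * N := by
            rw [Int.card_Icc]
            rcases le_or_gt (hi + 1 - lo) 0 with h0 | h0
            · rw [Int.toNat_of_nonpos h0]
              simp only [Nat.cast_zero]
              positivity
            · have heq : ((hi + 1 - lo).toNat : ℝ) = ((hi:ℝ) + 1 - lo) := by
                exact_mod_cast Int.toNat_of_nonneg h0.le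
              rw [heq]
              have h3 : (hi:ℝ) ≤ ((m:ℝ) + 1 + δ) * N := Int.floor_le _
              have h4 : ((m:ℝ) - δ) * N ≤ lo := Int.le_ceil _
              nlinarith
          calc ((Finset.Icc lo hi).card : ℝ≥0∞)
              = ENNReal.ofReal ((Finset.Icc lo hi).card : ℝ) := by
                rw [ENNReal.ofReal_natCast]
            _ ≤ ENNReal.ofReal (3 * N) := ENNReal.ofReal_le_ofReal hcard
      _ = ENNReal.ofReal (6 * δ * N) := by
          rw [← ENNReal.ofReal_mul (by positivity)]
          congr 1; ring

lemma box_bound (K : ℕ) (ψ : ℕ → ℝ) (hψ : ∀ q, 0 ≤ ψ q) (ε : ℝ) (hε : 0 ≤ ε)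
    (q : ℕ) (hq : 0 < q) (m : Fin K → ℤ) :
    volume ({h : Fin K → ℝ | ∀ k, ∃ a : ℤ, |h k - (a : ℝ) / Real.sqrt q| < ε * ψ q} ∩
      Set.pi Set.univ fun k => Set.Ico (m k : ℝ) ((m k : ℝ) + 1))
      ≤ ENNReal.ofReal (6 * (ε * ψ q) * Real.sqrt q) ^ K := by
  have hset : {h : Fin K → ℝ | ∀ k, ∃ a : ℤ, |h k - (a : ℝ) / Real.sqrt q| < ε * ψ q} ∩
      (Set.pi Set.univ fun k => Set.Ico (m k : ℝ) ((m k : ℝ) + 1)) =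
      Set.pi Set.univ fun k =>
        ({x : ℝ | ∃ a : ℤ, |x - (a : ℝ) / Real.sqrt q| < ε * ψ q} ∩
          Set.Ico (m k : ℝ) ((m k : ℝ) + 1)) := by
    ext h
    simp only [Set.mem_inter_iff, Set.mem_setOf_eq, Set.mem_pi, Set.mem_univ, true_implies]
    exact ⟨fun ⟨h1, h2⟩ k => ⟨h1 k, h2 k⟩, fun h' => ⟨fun k => (h' k).1, fun k => (h' k).2⟩⟩
  rw [hset, volume_pi_pi]
  calc ∏ k : Fin K, volume ({x : ℝ | ∃ a : ℤ, |x - (a : ℝ) / Real.sqrt q| < ε * ψ q} ∩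
        Set.Ico (m k : ℝ) ((m k : ℝ) + 1))
      ≤ ∏ _k : Fin K, ENNReal.ofReal (6 * (ε * ψ q) * Real.sqrt q) :=
        Finset.prod_le_prod' fun k _ => coord_bound q hq _ (m k)
    _ = ENNReal.ofReal (6 * (ε * ψ q) * Real.sqrt q) ^ K := by
        rw [Finset.prod_const, Finset.card_univ, Fintype.card_fin]

theorem stmt_3 (K : ℕ) (hK : 1 ≤ K) (ψ : ℕ → ℝ) (hψ : ∀ q, 0 ≤ ψ q)
    (hsum : Summable fun q : ℕ => (Real.sqrt q * ψ q) ^ K) :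
    ∀ᵐ h ∂(volume : Measure (Fin K → ℝ)),
      ∃ c > (0 : ℝ), ∀ q : ℕ, 0 < q →
        ∃ k : Fin K, ∀ a : ℤ, c * ψ q ≤ |h k - (a : ℝ) / Real.sqrt q| := by
  rw [ae_iff]
  set S : ℝ := ∑' q : ℕ, (Real.sqrt q * ψ q) ^ K with hS
  set T : Set (Fin K → ℝ) := ⋂ n : ℕ, ⋃ q : ℕ,
    {h : Fin K → ℝ | 0 < q ∧ ∀ k, ∃ a : ℤ,
      |h k - (a : ℝ) / Real.sqrt q| < (1/((n:ℝ)+1)) * ψ q} with hT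
  refine measure_mono_null (fun h hh => ?_) (?_ : volume T = 0)
  · simp only [Set.mem_setOf_eq] at hh
    push_neg at hh
    refine Set.mem_iInter.2 fun n => ?_
    obtain ⟨q, hq1, hq2⟩ := hh (1/((n:ℝ)+1)) (by positivity)
    exact Set.mem_iUnion.2 ⟨q, hq1, hq2⟩
  · have hcover : T ⊆ ⋃ m : Fin K → ℤ,
        (T ∩ Set.pi Set.univ fun k => Set.Ico (m k : ℝ) ((m k : ℝ) + 1)) := fun h hh =>
      Set.mem_iUnion.2 ⟨fun k => ⌊h k⌋, hh, fun k _ => ⟨Int.floor_le _, Int.lt_floor_add_one _⟩⟩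
    refine measure_mono_null hcover (measure_iUnion_null fun m => ?_)
    have hbound : ∀ n : ℕ,
        volume (T ∩ Set.pi Set.univ fun k => Set.Ico (m k : ℝ) ((m k : ℝ) + 1)) ≤
          ENNReal.ofReal ((6 * (1/((n:ℝ)+1)))^K * S) := by
      intro n
      set ε : ℝ := 1/((n:ℝ)+1) with hε
      have hε0 : 0 < ε := by positivity
      have h1 : T ∩ (Set.pi Set.univ fun k => Set.Ico (m k : ℝ) ((m k : ℝ) + 1)) ⊆
          ⋃ q : ℕ, ({h : Fin K → ℝ | 0 < q ∧ ∀ k, ∃ a : ℤ,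
            |h k - (a : ℝ) / Real.sqrt q| < ε * ψ q} ∩
            Set.pi Set.univ fun k => Set.Ico (m k : ℝ) ((m k : ℝ) + 1)) := by
        rintro h ⟨hh1, hh2⟩
        obtain ⟨q, hq⟩ := Set.mem_iUnion.1 (Set.mem_iInter.1 hh1 n)
        exact Set.mem_iUnion.2 ⟨q, hq, hh2⟩
      refine le_trans (measure_mono h1) (le_trans (measure_iUnion_le _) ?_)
      have hterm : ∀ q : ℕ,
          volume ({h : Fin K → ℝ | 0 < q ∧ ∀ k, ∃ a : ℤ,
            |h k - (a : ℝ) / Real.sqrt q| < ε * ψ q} ∩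
            Set.pi Set.univ fun k => Set.Ico (m k : ℝ) ((m k : ℝ) + 1)) ≤
          ENNReal.ofReal ((6 * ε)^K * (Real.sqrt q * ψ q)^K) := by
        intro q
        rcases Nat.eq_zero_or_pos q with rfl | hq
        · have he : {h : Fin K → ℝ | 0 < 0 ∧ ∀ k, ∃ a : ℤ,
              |h k - (a : ℝ) / Real.sqrt (0:ℕ)| < ε * ψ 0} = ∅ := by
            ext h; simp
          rw [he, Set.empty_inter, measure_empty]
          exact zero_le
        · have hsetEq : {h : Fin K → ℝ | 0 < q ∧ ∀ k, ∃ a : ℤ,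
              |h k - (a : ℝ) / Real.sqrt q| < ε * ψ q}
              = {h : Fin K → ℝ | ∀ k, ∃ a : ℤ, |h k - (a : ℝ) / Real.sqrt q| < ε * ψ q} := by
            ext h; simp [hq]
          rw [hsetEq]
          refine le_trans (box_bound K ψ hψ ε hε0.le q hq m) ?_
          rw [← ENNReal.ofReal_pow (mul_nonneg (mul_nonneg (by norm_num)
            (mul_nonneg hε0.le (hψ q))) (Real.sqrt_nonneg _))]
          exact ENNReal.ofReal_le_ofReal (le_of_eq (by ring))
      refine le_trans (ENNReal.tsum_le_tsum hterm) ?_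
      rw [← ENNReal.ofReal_tsum_of_nonneg (fun q => mul_nonneg (pow_nonneg (by positivity) K)
        (pow_nonneg (mul_nonneg (Real.sqrt_nonneg _) (hψ q)) K)) (hsum.mul_left _),
        tsum_mul_left, hS]
    have htend : Filter.Tendsto (fun n : ℕ => ENNReal.ofReal ((6 * (1/((n:ℝ)+1)))^K * S))
        Filter.atTop (nhds 0) := by
      have h6 : Filter.Tendsto (fun n : ℕ => 6 * (1/((n:ℝ)+1))) Filter.atTop (nhds 0) := by
        simpa using tendsto_one_div_add_atTop_nhds_zero_nat.const_mul (6:ℝ)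
      have hp : Filter.Tendsto (fun n : ℕ => (6 * (1/((n:ℝ)+1)))^K) Filter.atTop (nhds 0) := by
        simpa [zero_pow (show K ≠ 0 by omega)] using h6.pow K
      have hm : Filter.Tendsto (fun n : ℕ => (6 * (1/((n:ℝ)+1)))^K * S) Filter.atTop (nhds 0) := by
        simpa using hp.mul_const S
      simpa using ENNReal.tendsto_ofReal hm
    exact le_antisymm (ge_of_tendsto htend (Filter.Eventually.of_forall hbound)) zero_le
end

section
/- For almost every matrix H ∈ ℝ^{K×K} (with respect to Lebesgue measure), the monomial map S ↦ ∏_{m,k} H_{m,k}^{S_{m,k}} is injective on the set of exponent matrices S ∈ {0,1,...,L−1}^{K×K}; in particular, the set G_L of such monomial values has cardinality exactly L^{K^2}. -/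
open MeasureTheory

private lemma slice_null {ι : Type*} [Fintype ι] [DecidableEq ι] {α : Type*} [MeasureSpace α]
    [SigmaFinite (volume : Measure α)] (i : ι) {s : Set (ι → α)} (hs : MeasurableSet s)
    (h : ∀ H : ι → α, volume {x : α | Function.update H i x ∈ s} = 0) :
    (volume : Measure (ι → α)) s = 0 := by
  rcases isEmpty_or_nonempty α with hα | hα
  · haveI : IsEmpty (ι → α) := ⟨fun f => hα.false (f i)⟩
    simp [Set.eq_empty_of_isEmpty s]
  inhabit α
  classical
  haveI : Unique {j : ι // ¬ j ≠ i} :=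
    { default := ⟨i, not_not_intro rfl⟩,
      uniq := fun a => Subtype.ext (not_not.mp a.2) }
  set T := MeasurableEquiv.piEquivPiSubtypeProd (fun _ : ι => α) (fun j => j ≠ i) with hTdef
  have mp := volume_preserving_piEquivPiSubtypeProd (fun _ : ι => α) (fun j => j ≠ i)
  have key : (volume : Measure (ι → α)) s
      = (volume : Measure (({j : ι // j ≠ i} → α) × ({j : ι // ¬ j ≠ i} → α))) (T.symm ⁻¹' s) :=
    ((MeasurePreserving.symm T mp).measure_preimage_equiv s).symm
  rw [key, Measure.volume_eq_prod, Measure.measure_prod_null (T.symm.measurable hs)]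
  refine Filter.Eventually.of_forall (fun a => ?_)
  show (volume : Measure ({j : ι // ¬ j ≠ i} → α)) (Prod.mk a ⁻¹' (⇑T.symm ⁻¹' s)) = 0
  set B : Set ({j : ι // ¬ j ≠ i} → α) := Prod.mk a ⁻¹' (T.symm ⁻¹' s) with hBdef
  have mpU := volume_preserving_funUnique {j : ι // ¬ j ≠ i} α
  have key2 : (volume : Measure ({j : ι // ¬ j ≠ i} → α)) B
      = (volume : Measure α)
        ((MeasurableEquiv.funUnique {j : ι // ¬ j ≠ i} α).symm ⁻¹' B) := by
    have h2 := ((MeasurePreserving.symm _ mpU).measure_preimage_equiv B).symm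
    have hE : (Unique.fintype : Fintype {j : ι // ¬ j ≠ i}) = Subtype.fintype _ :=
      Subsingleton.elim _ _
    rw [hE] at h2
    exact h2
  set H : ι → α := fun j => if hj : j ≠ i then a ⟨j, hj⟩ else default with hHdef
  have hset : (MeasurableEquiv.funUnique {j : ι // ¬ j ≠ i} α).symm ⁻¹' B
      = {x : α | Function.update H i x ∈ s} := by
    ext x
    have hTs : T.symm (a, fun _ => x) = Function.update H i x := by
      funext j
      by_cases hj : j = i
      · subst hj
        simp [hTdef, MeasurableEquiv.piEquivPiSubtypeProd,
          Equiv.piEquivPiSubtypeProd_symm_apply, Function.update_self]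
      · simp [hTdef, MeasurableEquiv.piEquivPiSubtypeProd,
          Equiv.piEquivPiSubtypeProd_symm_apply, hj, Function.update_of_ne hj, hHdef]
    simp only [Set.mem_preimage, hBdef, Set.mem_setOf_eq]
    constructor
    · intro hx
      rw [← hTs]
      convert hx using 2
      exact Prod.ext rfl (funext fun j => (@uniqueElim_const _ _ this x j).symm)
    · intro hx
      show T.symm (a, _) ∈ s
      convert (hTs ▸ hx : T.symm (a, fun _ => x) ∈ s) using 2
      exact Prod.ext rfl (funext fun j => @uniqueElim_const _ _ this x j)
  rw [key2, hset]
  exact h H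

theorem stmt_6 (K L : ℕ) (hK : 2 ≤ K) (hL : 1 ≤ L) :
    ∀ᵐ H ∂(volume : Measure (Fin K → Fin K → ℝ)),
      Function.Injective
        (fun S : Fin K → Fin K → Fin L => ∏ m : Fin K, ∏ k : Fin K, H m k ^ (S m k : ℕ)) ∧
      (Set.range
        (fun S : Fin K → Fin K → Fin L =>
          ∏ m : Fin K, ∏ k : Fin K, H m k ^ (S m k : ℕ))).ncard = L ^ (K ^ 2) := by
  classical
  have hev : ∀ m k : Fin K, Measurable fun H : Fin K → Fin K → ℝ => H m k :=
    fun m k => (measurable_pi_apply k).comp (measurable_pi_apply m)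
  have hFmeas : ∀ S : Fin K → Fin K → Fin L,
      Measurable fun H : Fin K → Fin K → ℝ => ∏ m, ∏ k, H m k ^ (S m k : ℕ) := by
    intro S
    apply Finset.measurable_prod
    intro m _
    apply Finset.measurable_prod
    intro k _
    exact (hev m k).pow_const _
  -- almost every H has all entries nonzero
  have hZ : ∀ᵐ H ∂(volume : Measure (Fin K → Fin K → ℝ)), ∀ m k, H m k ≠ 0 := by
    rw [ae_all_iff]
    intro m
    rw [ae_all_iff]
    intro k
    have hms : MeasurableSet {H : Fin K → Fin K → ℝ | H m k = 0} :=
      (hev m k) (measurableSet_singleton (0:ℝ))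
    have hnull : (volume : Measure (Fin K → Fin K → ℝ)) {H | H m k = 0} = 0 := by
      apply slice_null m hms
      intro H
      have hms1 : MeasurableSet
          {x : Fin K → ℝ | Function.update H m x ∈ {H : Fin K → Fin K → ℝ | H m k = 0}} :=
        (measurable_update H) hms
      have h1 : {x : Fin K → ℝ | Function.update H m x ∈ {H : Fin K → Fin K → ℝ | H m k = 0}}
          = {x : Fin K → ℝ | x k = 0} := by
        ext x; simp [Function.update_self]
      rw [h1]
      apply slice_null k (measurableSet_eq_fun (measurable_pi_apply k)
        (measurable_const : Measurable fun _ : Fin K → ℝ => (0:ℝ)))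
      intro r
      have h2 : {x : ℝ | Function.update r k x ∈ {x : Fin K → ℝ | x k = 0}} = {(0:ℝ)} := by
        ext x; simp [Function.update_self]
      rw [h2]
      exact measure_singleton 0
    rw [ae_iff]
    simpa using hnull
  set A : (Fin K → Fin K → Fin L) → (Fin K → Fin K → Fin L) → Set (Fin K → Fin K → ℝ) :=
    fun S T => {H | (∀ m k, H m k ≠ 0) ∧
      ∏ m, ∏ k, H m k ^ (S m k : ℕ) = ∏ m, ∏ k, H m k ^ (T m k : ℕ)} with hAdef
  have hAmeas : ∀ S T, MeasurableSet (A S T) := by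
    intro S T
    have h1 : MeasurableSet {H : Fin K → Fin K → ℝ | ∀ m k, H m k ≠ 0} := by
      rw [Set.setOf_forall]
      apply MeasurableSet.iInter
      intro m
      have : {H : Fin K → Fin K → ℝ | ∀ k, H m k ≠ 0} = ⋂ k, {H | H m k ≠ 0} := by
        rw [Set.setOf_forall]
      rw [this]
      apply MeasurableSet.iInter
      intro k
      exact ((hev m k) (measurableSet_singleton (0:ℝ))).compl
    exact MeasurableSet.inter h1 (measurableSet_eq_fun (hFmeas S) (hFmeas T))
  have hAnull : ∀ S T, S ≠ T → (volume : Measure (Fin K → Fin K → ℝ)) (A S T) = 0 := by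
    intro S T hST
    obtain ⟨m₀, hm₀⟩ := Function.ne_iff.mp hST
    obtain ⟨k₀, hk₀⟩ := Function.ne_iff.mp hm₀
    have hab : (S m₀ k₀ : ℕ) ≠ (T m₀ k₀ : ℕ) := fun h => hk₀ (Fin.ext h)
    apply slice_null m₀ (hAmeas S T)
    intro H
    apply slice_null k₀ ((measurable_update H) (hAmeas S T))
    intro r
    set a := (S m₀ k₀ : ℕ) with hadef
    set b := (T m₀ k₀ : ℕ) with hbdef
    set H' : ℝ → (Fin K → Fin K → ℝ) :=
      fun x => Function.update H m₀ (Function.update r k₀ x) with hH'def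
    have hsplit : ∀ (u : Fin K → Fin K → Fin L) (x : ℝ),
        ∏ m, ∏ k, (H' x) m k ^ (u m k : ℕ)
          = x ^ (u m₀ k₀ : ℕ) * ((∏ k ∈ Finset.univ.erase k₀, r k ^ (u m₀ k : ℕ)) *
            ∏ m ∈ Finset.univ.erase m₀, ∏ k, H m k ^ (u m k : ℕ)) := by
      intro u x
      rw [← Finset.mul_prod_erase Finset.univ
          (fun m => ∏ k, (H' x) m k ^ (u m k : ℕ)) (Finset.mem_univ m₀),
        ← Finset.mul_prod_erase Finset.univ
          (fun k => (H' x) m₀ k ^ (u m₀ k : ℕ)) (Finset.mem_univ k₀)]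
      have e1 : (H' x) m₀ k₀ = x := by simp [hH'def]
      have e2 : ∀ k ∈ Finset.univ.erase k₀,
          (H' x) m₀ k ^ (u m₀ k : ℕ) = r k ^ (u m₀ k : ℕ) := by
        intro k hk
        have hkne : k ≠ k₀ := (Finset.mem_erase.mp hk).1
        simp [hH'def, Function.update_of_ne hkne]
      have e3 : ∀ m ∈ Finset.univ.erase m₀,
          ∏ k, (H' x) m k ^ (u m k : ℕ) = ∏ k, H m k ^ (u m k : ℕ) := by
        intro m hm
        have hmne : m ≠ m₀ := (Finset.mem_erase.mp hm).1
        simp [hH'def, Function.update_of_ne hmne]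
      rw [Finset.prod_congr rfl e2, Finset.prod_congr rfl e3, e1]
      ring
    set cS := (∏ k ∈ Finset.univ.erase k₀, r k ^ (S m₀ k : ℕ)) *
        ∏ m ∈ Finset.univ.erase m₀, ∏ k, H m k ^ (S m k : ℕ) with hcSdef
    set cT := (∏ k ∈ Finset.univ.erase k₀, r k ^ (T m₀ k : ℕ)) *
        ∏ m ∈ Finset.univ.erase m₀, ∏ k, H m k ^ (T m k : ℕ) with hcTdef
    by_cases hcond : (∀ k, k ≠ k₀ → r k ≠ 0) ∧ (∀ m, m ≠ m₀ → ∀ k, H m k ≠ 0)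
    · have hcS : cS ≠ 0 := by
        refine mul_ne_zero (Finset.prod_ne_zero_iff.mpr fun k hk =>
          pow_ne_zero _ (hcond.1 k (Finset.mem_erase.mp hk).1)) ?_
        exact Finset.prod_ne_zero_iff.mpr fun m hm => Finset.prod_ne_zero_iff.mpr
          fun k _ => pow_ne_zero _ (hcond.2 m (Finset.mem_erase.mp hm).1 k)
      set p : Polynomial ℝ :=
        Polynomial.C cS * Polynomial.X ^ a - Polynomial.C cT * Polynomial.X ^ b with hpdef
      have hpc : p.coeff a = cS := by
        have hba : ¬ (b = a) := fun h => hab h.symm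
        simp [hpdef, Polynomial.coeff_sub, Polynomial.coeff_C_mul, Polynomial.coeff_X_pow, hba]
        exact fun h => absurd h hab
      have hpne : p ≠ 0 := by
        intro h0
        rw [h0, Polynomial.coeff_zero] at hpc
        exact hcS hpc.symm
      refine measure_mono_null ?_
        ((Polynomial.finite_setOf_isRoot hpne).measure_zero volume)
      intro x hx
      have hx' : H' x ∈ A S T := hx
      rw [hAdef] at hx'
      obtain ⟨hnz, heq⟩ := hx'
      rw [hsplit S x, hsplit T x] at heq
      show p.IsRoot x
      have : Polynomial.eval x p = cS * x ^ a - cT * x ^ b := by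
        simp [hpdef]
      rw [Polynomial.IsRoot, this]
      rw [← hcSdef, ← hcTdef] at heq
      linear_combination heq
    · refine measure_mono_null (fun x hx => ?_) (measure_empty (μ := volume))
      exfalso
      have hx' : H' x ∈ A S T := hx
      rw [hAdef] at hx'
      obtain ⟨hnz, -⟩ := hx'
      push_neg at hcond
      by_cases h1 : ∀ k, k ≠ k₀ → r k ≠ 0
      · obtain ⟨m, hmne, k, hk0⟩ := hcond h1
        have : (H' x) m k = H m k := by simp [hH'def, Function.update_of_ne hmne]
        exact hnz m k (this.trans hk0)
      · push_neg at h1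
        obtain ⟨k, hkne, hk0⟩ := h1
        have : (H' x) m₀ k = r k := by simp [hH'def, Function.update_of_ne hkne]
        exact hnz m₀ k (this.trans hk0)
  have hae : ∀ᵐ H ∂(volume : Measure (Fin K → Fin K → ℝ)),
      ∀ S T : Fin K → Fin K → Fin L, S ≠ T → H ∉ A S T := by
    rw [ae_all_iff]
    intro S
    rw [ae_all_iff]
    intro T
    by_cases h : S = T
    · exact Filter.Eventually.of_forall fun H hST => absurd h hST
    · have h0 := hAnull S T h
      rw [← compl_mem_ae_iff] at h0
      filter_upwards [h0] with H hH _
      exact hH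
  filter_upwards [hZ, hae] with H h0 hA'
  have hinj : Function.Injective
      (fun S : Fin K → Fin K → Fin L => ∏ m : Fin K, ∏ k : Fin K, H m k ^ (S m k : ℕ)) := by
    intro S T hEq
    by_contra hne
    exact hA' S T hne ⟨h0, hEq⟩
  refine ⟨hinj, ?_⟩
  have hrange : Set.range (fun S : Fin K → Fin K → Fin L =>
      ∏ m : Fin K, ∏ k : Fin K, H m k ^ (S m k : ℕ))
      = ↑(Finset.univ.image (fun S : Fin K → Fin K → Fin L =>
        ∏ m : Fin K, ∏ k : Fin K, H m k ^ (S m k : ℕ))) := by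
    rw [Finset.coe_image, Finset.coe_univ, Set.image_univ]
  rw [hrange, Set.ncard_coe_finset, Finset.card_image_of_injective _ hinj, Finset.card_univ]
  simp [Fintype.card_fun, ← pow_mul, sq]
end

section
/- Let B ⊆ ℝ^{K−1} have Lebesgue measure zero, and let D ⊆ ℝ^K be the set of nonzero vectors h such that (h_1/||h||, ..., h_{K−1}/||h||) ∈ B. Then D has Lebesgue measure zero in ℝ^K. -/
open MeasureTheory

theorem stmt_9 (K : ℕ) (hK : 2 ≤ K) (B : Set (Fin (K - 1) → ℝ))
    (hB : volume B = 0) :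
    volume {h : EuclideanSpace ℝ (Fin K) |
      h ≠ 0 ∧ (fun i : Fin (K - 1) => h (Fin.castLE (Nat.sub_le K 1) i) / ‖h‖) ∈ B} = 0 := by
  obtain ⟨n, rfl⟩ : ∃ n, K = n + 1 := ⟨K - 1, (Nat.succ_pred_eq_of_pos (by omega)).symm⟩
  set E := EuclideanSpace ℝ (Fin (n + 1))
  set c : Fin n → Fin (n + 1) := Fin.castLE (Nat.sub_le (n + 1) 1) with hc
  have hcs : c = Fin.castSucc := rfl
  -- replace B by a measurable superset
  obtain ⟨B', hBB', hB'meas, hB'⟩ := exists_measurable_superset_of_null hB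
  -- the measure preserving equivalence with ℝ × (Fin n → ℝ)
  let e : E ≃ᵐ ℝ × (Fin n → ℝ) :=
    (MeasurableEquiv.toLp 2 (Fin (n+1) → ℝ)).symm.trans
      (MeasurableEquiv.piFinSuccAbove (fun _ => ℝ) (Fin.last n))
  have he : MeasurePreserving e volume volume :=
    (volume_preserving_piFinSuccAbove (fun _ => ℝ) (Fin.last n)).comp
      (EuclideanSpace.volume_preserving_symm_measurableEquiv_toLp _)
  have he_apply : ∀ h : E, e h = (h (Fin.last n), fun j => h (c j)) := by
    intro h
    simp only [e, MeasurableEquiv.trans_apply, MeasurableEquiv.piFinSuccAbove_apply,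
      MeasurableEquiv.coe_toLp_symm, Fin.succAbove_last, hcs,
      Fin.insertNthEquiv, Fin.removeNth, Equiv.coe_fn_symm_mk]
    refine Prod.ext rfl (funext fun j => ?_)
    show h ((Fin.last n).succAbove j) = h (c j)
    rw [Fin.succAbove_last, hcs]
  -- the hyperplane is null
  have hplane : volume {h : E | h (Fin.last n) = 0} = 0 := by
    have : {h : E | h (Fin.last n) = 0} = e ⁻¹' (({0} : Set ℝ) ×ˢ Set.univ) := by
      ext h; simp [he_apply, eq_comm]
    rw [this, he.measure_preimage
      (((MeasurableSet.singleton 0).prod MeasurableSet.univ).nullMeasurableSet),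
      show (volume : Measure (ℝ × (Fin n → ℝ))) = (volume : Measure ℝ).prod volume from rfl,
      Measure.prod_prod]
    simp
  -- the "cylinder" over B' is null
  have hcyl : volume {h : E | (fun j => h (c j)) ∈ B'} = 0 := by
    have : {h : E | (fun j => h (c j)) ∈ B'} = e ⁻¹' ((Set.univ : Set ℝ) ×ˢ B') := by
      ext h; simp [he_apply]
    rw [this, he.measure_preimage ((MeasurableSet.univ.prod hB'meas).nullMeasurableSet),
      show (volume : Measure (ℝ × (Fin n → ℝ))) = (volume : Measure ℝ).prod volume from rfl,
      Measure.prod_prod, show (volume : Measure (Fin n → ℝ)) B' = 0 from hB', mul_zero]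
  -- the bad set in parameter space
  set s : Set E := {h : E | (∑ j : Fin n, (h (c j)) ^ 2) < 1 ∧ (fun j => h (c j)) ∈ B'}
    with hs_def
  have hs : volume s = 0 :=
    measure_mono_null (fun h hh => hh.2) hcyl
  -- the parametrizing maps
  set F : ℝ → E → E := fun ε h => (WithLp.equiv 2 (Fin (n+1) → ℝ)).symm
    (fun i => if (i : ℕ) < n then
        ε * h i * h (Fin.last n) / Real.sqrt (1 - ∑ j : Fin n, (h (c j)) ^ 2)
      else h (Fin.last n)) with hF
  have hev : ∀ (i : Fin (n+1)) (x : E), DifferentiableAt ℝ (fun h : E => h i) x := by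
    intro i x
    exact (EuclideanSpace.proj i : E →L[ℝ] ℝ).differentiableAt
  have hFdiff : ∀ ε : ℝ, DifferentiableOn ℝ (F ε) s := by
    intro ε x hx
    have h1 : 0 < 1 - ∑ j : Fin n, (x (c j)) ^ 2 := by
      have := hx.1; dsimp only [hs_def, Set.mem_setOf_eq] at this ⊢; linarith
    have hQ : DifferentiableAt ℝ (fun h : E => ∑ j : Fin n, (h (c j)) ^ 2) x := by
      apply DifferentiableAt.fun_sum
      intro j _
      exact (hev (c j) x).pow 2
    have hsqrt : DifferentiableAt ℝ
        (fun h : E => Real.sqrt (1 - ∑ j : Fin n, (h (c j)) ^ 2)) x :=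
      ((differentiableAt_const (1:ℝ)).sub hQ).sqrt (by exact ne_of_gt h1)
    have hne : Real.sqrt (1 - ∑ j : Fin n, (x (c j)) ^ 2) ≠ 0 :=
      ne_of_gt (Real.sqrt_pos.2 h1)
    have key : DifferentiableAt ℝ (fun h : E => (fun i : Fin (n+1) =>
        if (i : ℕ) < n then
          ε * h i * h (Fin.last n) / Real.sqrt (1 - ∑ j : Fin n, (h (c j)) ^ 2)
        else h (Fin.last n))) x := by
      rw [differentiableAt_pi]
      intro i
      by_cases hi : (i : ℕ) < n
      · simp only [if_pos hi]
        have hnum : DifferentiableAt ℝ (fun h : E => ε * h i * h (Fin.last n)) x :=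
          ((differentiableAt_const ε).mul (hev i x)).mul (hev (Fin.last n) x)
        have := hnum.fun_mul (hsqrt.fun_inv hne)
        simpa only [div_eq_mul_inv] using this
      · simp only [if_neg hi]
        exact hev (Fin.last n) x
    have : DifferentiableAt ℝ (F ε) x :=
      ((PiLp.continuousLinearEquiv 2 ℝ (fun _ : Fin (n+1) => ℝ)).symm.differentiableAt).comp
        x key
    exact this.differentiableWithinAt
  have himg : ∀ ε : ℝ, volume (F ε '' s) = 0 := fun ε =>
    addHaar_image_eq_zero_of_differentiableOn_of_addHaar_eq_zero volume (hFdiff ε) hs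
  -- inclusion
  have hsub : {h : E |
      h ≠ 0 ∧ (fun i : Fin n => h (Fin.castLE (Nat.sub_le (n+1) 1) i) / ‖h‖) ∈ B} ⊆
      {h : E | h (Fin.last n) = 0} ∪ (F 1 '' s ∪ F (-1) '' s) := by
    rintro h ⟨hne0, hmem⟩
    by_cases ht : h (Fin.last n) = 0
    · exact Or.inl ht
    refine Or.inr ?_
    set t := h (Fin.last n) with htdef
    set r := ‖h‖ with hrdef
    have hr : 0 < r := norm_pos_iff.2 hne0
    set g : E := (WithLp.equiv 2 (Fin (n+1) → ℝ)).symm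
      (fun i => if (i : ℕ) < n then h i / r else t) with hg
    have gi : ∀ i : Fin (n+1), (i : ℕ) < n → g i = h i / r := by
      intro i hi
      simp only [hg, WithLp.equiv_symm_apply, PiLp.toLp_apply, if_pos hi]
    have gc : ∀ j : Fin n, g (c j) = h (c j) / r := fun j => gi (c j) j.isLt
    have glast : g (Fin.last n) = t := by
      simp only [hg, WithLp.equiv_symm_apply, PiLp.toLp_apply, Fin.val_last, lt_irrefl, if_false]
    have hsum : r ^ 2 = (∑ j : Fin n, (h (c j)) ^ 2) + t ^ 2 := by
      have h1 : r ^ 2 = ∑ i : Fin (n+1), (h i) ^ 2 := by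
        rw [hrdef, EuclideanSpace.norm_eq, Real.sq_sqrt (by positivity)]
        simp [Real.norm_eq_abs, sq_abs]
      rw [h1, Fin.sum_univ_castSucc, ← hcs]
    have hQg : (∑ j : Fin n, (g (c j)) ^ 2) = 1 - t ^ 2 / r ^ 2 := by
      simp only [gc, div_pow]
      rw [← Finset.sum_div, eq_sub_iff_add_eq, ← add_div, hsum.symm, div_self (by positivity)]
    have hQlt : (∑ j : Fin n, (g (c j)) ^ 2) < 1 := by
      rw [hQg]
      have : 0 < t ^ 2 / r ^ 2 := by positivity
      linarith
    have hgs : g ∈ s := by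
      refine ⟨hQlt, ?_⟩
      have : (fun j : Fin n => g (c j)) = (fun i : Fin n => h (c i) / ‖h‖) := by
        funext j; rw [gc j, hrdef]
      rw [this]
      exact hBB' hmem
    have hsqrtg : Real.sqrt (1 - ∑ j : Fin n, (g (c j)) ^ 2) = |t| / r := by
      rw [hQg, sub_sub_cancel, show t ^ 2 / r ^ 2 = (|t| / r) ^ 2 by rw [div_pow, sq_abs],
        Real.sqrt_sq (by positivity)]
    set ε : ℝ := if 0 < t then 1 else -1 with hε
    have hεt : ε * t = |t| := by
      rcases lt_trichotomy 0 t with h0 | h0 | h0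
      · rw [hε, if_pos h0, one_mul, abs_of_pos h0]
      · exact absurd h0.symm ht
      · rw [hε, if_neg (by linarith), abs_of_neg h0]; ring
    have hε0 : ε ≠ 0 := by
      rcases (by rcases hε with _; by_cases h0 : 0 < t <;> simp [hε, h0] : ε = 1 ∨ ε = -1) with
        h1 | h1 <;> rw [h1] <;> norm_num
    have ht' : t ≠ 0 := ht
    have hFg : F ε g = h := by
      have key : ∀ i : Fin (n+1), (F ε g) i = h i := by
        intro i
        have hFi : (F ε g) i = if (i : ℕ) < n then
            ε * g i * g (Fin.last n) / Real.sqrt (1 - ∑ j : Fin n, (g (c j)) ^ 2)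
          else g (Fin.last n) := by
          simp only [hF, WithLp.equiv_symm_apply, PiLp.toLp_apply]
        rw [hFi]
        by_cases hi : (i : ℕ) < n
        · rw [if_pos hi, gi i hi, glast, hsqrtg, ← hεt]
          field_simp
        · rw [if_neg hi, glast, htdef]
          have hi' : i = Fin.last n := by
            have := i.isLt
            exact Fin.ext (by simp only [Fin.val_last]; omega)
          rw [hi']
      exact (WithLp.equiv 2 (Fin (n+1) → ℝ)).injective (funext key)
    rcases (by by_cases h0 : 0 < t <;> simp [hε, h0] : ε = 1 ∨ ε = -1) with h1 | h1
    · exact Or.inl ⟨g, hgs, by rw [← h1, hFg]⟩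
    · exact Or.inr ⟨g, hgs, by rw [← h1, hFg]⟩
  refine measure_mono_null hsub ?_
  refine measure_union_null hplane (measure_union_null (himg 1) (himg (-1)))
end

section
/- Let K ≥ 2 and fix δ > 0. Suppose h ∈ ℝ^K satisfies: there exists c > 0 such that for all q ∈ ℕ and all a ∈ ℤ^{K−1}, max_{1≤k≤K−1} |h_k/||h|| − a_k/√q| ≥ c q^{−1/2 − 1/(K−1) − δ}. Then for every nonzero a ∈ ℤ^K with ||a||^2 = q, the rate loss term ||a||^2 + P(||h||^2||a||^2 − (h·a)^2) is at least max{q, (4c^2/π^2) P ||h||^2 q^{−2/(K−1) − 2δ}}, and hence at least ((4c^2/π^2) ||h||^2)^{1/(1+2/(K−1)+2δ)} · P^{1/(1+2/(K−1)+2δ)} for all choices of a. -/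
open Real

set_option maxHeartbeats 2000000 in
theorem stmt_15 (K : ℕ) (hK : 2 ≤ K) (δ : ℝ) (hδ : 0 < δ)
    (h : Fin K → ℝ) (hh : h ≠ 0) (c : ℝ) (hc : 0 < c)
    (hdio : ∀ q : ℕ, 0 < q → ∀ b : Fin (K - 1) → ℤ, ∃ k : Fin (K - 1),
      c * (q : ℝ) ^ (-(1 : ℝ) / 2 - 1 / ((K : ℝ) - 1) - δ) ≤
        |h (Fin.castLE (Nat.sub_le K 1) k) / Real.sqrt (∑ j, h j ^ 2) -
          (b k : ℝ) / Real.sqrt q|)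
    (P : ℝ) (hP : 0 < P)
    (a : Fin K → ℤ) (ha : a ≠ 0) (hangle : 0 ≤ ∑ k, h k * (a k : ℝ))
    (q : ℕ) (hq : (q : ℝ) = ∑ k, (a k : ℝ) ^ 2) :
    (max (q : ℝ)
        ((4 * c ^ 2 / π ^ 2) * P * (∑ j, h j ^ 2) *
          (q : ℝ) ^ (-(2 : ℝ) / ((K : ℝ) - 1) - 2 * δ)) ≤
      (∑ k, (a k : ℝ) ^ 2) +
        P * ((∑ j, h j ^ 2) * (∑ k, (a k : ℝ) ^ 2) - (∑ k, h k * (a k : ℝ)) ^ 2)) ∧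
    ((4 * c ^ 2 / π ^ 2) * (∑ j, h j ^ 2)) ^
          ((1 : ℝ) / (1 + 2 / ((K : ℝ) - 1) + 2 * δ)) *
        P ^ ((1 : ℝ) / (1 + 2 / ((K : ℝ) - 1) + 2 * δ)) ≤
      (∑ k, (a k : ℝ) ^ 2) +
        P * ((∑ j, h j ^ 2) * (∑ k, (a k : ℝ) ^ 2) - (∑ k, h k * (a k : ℝ)) ^ 2) := by
  set H : ℝ := ∑ j, h j ^ 2 with hHdef
  set D : ℝ := ∑ k, h k * (a k : ℝ) with hDdef
  set S : ℝ := ∑ k, (a k : ℝ) ^ 2 with hSdef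
  -- positivity facts
  have hH : 0 < H := by
    obtain ⟨j, hj⟩ := Function.ne_iff.mp hh
    exact Finset.sum_pos' (fun i _ => sq_nonneg _)
      ⟨j, Finset.mem_univ j, (sq_nonneg _).lt_of_ne (Ne.symm (pow_ne_zero 2 hj))⟩
  have hS : 0 < S := by
    obtain ⟨j, hj⟩ := Function.ne_iff.mp ha
    have : (a j : ℝ) ≠ 0 := by exact_mod_cast hj
    exact Finset.sum_pos' (fun i _ => sq_nonneg _)
      ⟨j, Finset.mem_univ j, (sq_nonneg _).lt_of_ne (Ne.symm (pow_ne_zero 2 this))⟩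
  have hqR : (0:ℝ) < (q:ℝ) := by rw [hq]; exact hS
  have hqpos : 0 < q := by exact_mod_cast hqR
  have hK1 : (1:ℝ) ≤ (K:ℝ) - 1 := by
    have : (2:ℝ) ≤ (K:ℝ) := by exact_mod_cast hK
    linarith
  -- Cauchy-Schwarz
  have hCS : D ^ 2 ≤ H * S := by
    have := Finset.sum_mul_sq_le_sq_mul_sq Finset.univ h (fun k => (a k : ℝ))
    simpa [hHdef, hDdef, hSdef] using this
  -- sqrt setup
  set u : ℝ := Real.sqrt H with hudef
  set v : ℝ := Real.sqrt (q:ℝ) with hvdef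
  have hu0 : 0 < u := Real.sqrt_pos.mpr hH
  have hv0 : 0 < v := Real.sqrt_pos.mpr hqR
  have hu2 : u ^ 2 = H := Real.sq_sqrt hH.le
  have hv2 : v ^ 2 = (q:ℝ) := Real.sq_sqrt hqR.le
  -- diophantine application
  obtain ⟨k, hk⟩ := hdio q hqpos (fun k => a (Fin.castLE (Nat.sub_le K 1) k))
  set s : ℝ := -(1:ℝ)/2 - 1/((K:ℝ)-1) - δ with hsdef
  set X : ℝ := (q:ℝ) ^ s with hXdef
  have hX0 : 0 < X := Real.rpow_pos_of_pos hqR s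
  set k' : Fin K := Fin.castLE (Nat.sub_le K 1) k with hk'def
  have hcomp : (c * X) ^ 2 ≤ (h k' / u - (a k' : ℝ) / v) ^ 2 := by
    have h1 : (c * X) ^ 2 ≤ |h k' / u - (a k' : ℝ) / v| ^ 2 :=
      pow_le_pow_left₀ (by positivity) hk 2
    simpa [sq_abs] using h1
  have hsingle : (h k' / u - (a k' : ℝ) / v) ^ 2 ≤ ∑ j, (h j / u - (a j : ℝ) / v) ^ 2 :=
    Finset.single_le_sum (f := fun j => (h j / u - (a j : ℝ) / v) ^ 2)
      (fun i _ => sq_nonneg _) (Finset.mem_univ k')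
  have hsum : ∑ j, (h j / u - (a j : ℝ) / v) ^ 2 = 2 - 2 * D / (u * v) := by
    have expand : ∀ j, (h j / u - (a j : ℝ) / v) ^ 2 =
        (h j) ^ 2 / u ^ 2 - 2 * (h j * (a j : ℝ)) / (u * v) + (a j : ℝ) ^ 2 / v ^ 2 := by
      intro j
      field_simp
      ring
    rw [Finset.sum_congr rfl (fun j _ => expand j)]
    rw [Finset.sum_add_distrib, Finset.sum_sub_distrib,
      ← Finset.sum_div, ← Finset.sum_div, ← Finset.sum_div, ← Finset.mul_sum]
    rw [hu2, hv2, ← hHdef, ← hDdef, ← hSdef, ← hq]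
    field_simp
    ring
  have hE : (c * X) ^ 2 ≤ 2 - 2 * D / (u * v) := by
    calc (c * X) ^ 2 ≤ _ := hcomp
    _ ≤ _ := hsingle
    _ = _ := hsum
  have huv : 0 < u * v := mul_pos hu0 hv0
  -- multiply out
  have hE2 : (c * X) ^ 2 * (u * v) ≤ 2 * (u * v) - 2 * D := by
    have := mul_le_mul_of_nonneg_right hE huv.le
    have hne : u * v ≠ 0 := huv.ne'
    calc (c * X) ^ 2 * (u * v) ≤ (2 - 2 * D / (u * v)) * (u * v) := this
    _ = 2 * (u * v) - 2 * D := by field_simp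
  have hDuv : D ≤ u * v := by
    nlinarith [hCS, hu2, hv2, hq, hangle]
  -- key inequality
  have hkey : c ^ 2 * X ^ 2 * (H * (q:ℝ)) / 2 ≤ H * (q:ℝ) - D ^ 2 := by
    have huv2 : (u * v) ^ 2 = H * (q:ℝ) := by rw [mul_pow, hu2, hv2]
    rw [← huv2]
    have t1 : c ^ 2 * X ^ 2 * (u * v) ≤ 2 * ((u * v) - D) := by
      calc c ^ 2 * X ^ 2 * (u * v) = (c * X) ^ 2 * (u * v) := by ring
      _ ≤ 2 * (u * v) - 2 * D := hE2
      _ = 2 * ((u * v) - D) := by ring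
    have t2 := mul_le_mul_of_nonneg_left t1 huv.le
    have t3 : c ^ 2 * X ^ 2 * (u * v) ^ 2 ≤ 2 * (u * v) ^ 2 - 2 * ((u * v) * D) := by
      calc c ^ 2 * X ^ 2 * (u * v) ^ 2 = (u * v) * (c ^ 2 * X ^ 2 * (u * v)) := by ring
      _ ≤ (u * v) * (2 * ((u * v) - D)) := t2
      _ = 2 * (u * v) ^ 2 - 2 * ((u * v) * D) := by ring
    have t4 : 0 ≤ (u * v) * D - D ^ 2 := by
      have := mul_nonneg hangle (sub_nonneg.mpr hDuv)
      calc (0:ℝ) ≤ D * ((u * v) - D) := this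
      _ = (u * v) * D - D ^ 2 := by ring
    linarith [t3, t4]
  -- exponent identity: X^2 * q = q^(-(2)/(K-1) - 2δ)
  have hQexp : X ^ 2 * (q:ℝ) = (q:ℝ) ^ (-(2:ℝ) / ((K:ℝ)-1) - 2 * δ) := by
    have h1 : X ^ 2 = (q:ℝ) ^ (2 * s) := by
      rw [hXdef, ← Real.rpow_natCast ((q:ℝ) ^ s) 2, ← Real.rpow_mul hqR.le]
      congr 1
      push_cast
      ring
    calc X ^ 2 * (q:ℝ) = (q:ℝ) ^ (2 * s) * (q:ℝ) ^ (1:ℝ) := by rw [h1, Real.rpow_one]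
    _ = (q:ℝ) ^ (2 * s + 1) := (Real.rpow_add hqR _ _).symm
    _ = (q:ℝ) ^ (-(2:ℝ) / ((K:ℝ)-1) - 2 * δ) := by
        congr 1
        rw [hsdef]
        ring
  have hπ2 : (8:ℝ) ≤ π ^ 2 := by
    have h3 : (3:ℝ) ≤ π := Real.pi_gt_three.le
    calc (8:ℝ) ≤ 3 * 3 := by norm_num
    _ ≤ π * π := mul_le_mul h3 h3 (by norm_num) (by linarith)
    _ = π ^ 2 := (sq π).symm
  have hπ0 : (0:ℝ) < π := Real.pi_pos
  have hQ0 : 0 < (q:ℝ) ^ (-(2:ℝ) / ((K:ℝ)-1) - 2 * δ) := Real.rpow_pos_of_pos hqR _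
  have hcoef : 4 * c ^ 2 / π ^ 2 ≤ c ^ 2 / 2 := by
    rw [div_le_div_iff₀ (by positivity) (by norm_num)]
    have := mul_le_mul_of_nonneg_left hπ2 (sq_nonneg c)
    linarith
  -- midpoint bound
  have hmid : (4 * c ^ 2 / π ^ 2) * P * H * ((q:ℝ) ^ (-(2:ℝ) / ((K:ℝ)-1) - 2 * δ)) ≤
      P * (H * (q:ℝ) - D ^ 2) := by
    have h2 : (c ^ 2 / 2) * P * H * ((q:ℝ) ^ (-(2:ℝ) / ((K:ℝ)-1) - 2 * δ)) =
        P * (c ^ 2 * X ^ 2 * (H * (q:ℝ)) / 2) := by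
      rw [← hQexp]; ring
    have h1 : (4 * c ^ 2 / π ^ 2) * P * H * ((q:ℝ) ^ (-(2:ℝ) / ((K:ℝ)-1) - 2 * δ)) ≤
        (c ^ 2 / 2) * P * H * ((q:ℝ) ^ (-(2:ℝ) / ((K:ℝ)-1) - 2 * δ)) := by
      have := mul_le_mul_of_nonneg_right (mul_le_mul_of_nonneg_right
        (mul_le_mul_of_nonneg_right hcoef hP.le) hH.le) hQ0.le
      linarith [this]
    calc (4 * c ^ 2 / π ^ 2) * P * H * ((q:ℝ) ^ (-(2:ℝ) / ((K:ℝ)-1) - 2 * δ)) ≤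
        (c ^ 2 / 2) * P * H * ((q:ℝ) ^ (-(2:ℝ) / ((K:ℝ)-1) - 2 * δ)) := h1
    _ = P * (c ^ 2 * X ^ 2 * (H * (q:ℝ)) / 2) := h2
    _ ≤ P * (H * (q:ℝ) - D ^ 2) := mul_le_mul_of_nonneg_left hkey hP.le
  have part1 : max (q:ℝ) ((4 * c ^ 2 / π ^ 2) * P * H *
      ((q:ℝ) ^ (-(2:ℝ) / ((K:ℝ)-1) - 2 * δ))) ≤ S + P * (H * S - D ^ 2) := by
    apply max_le
    · have h0 : 0 ≤ H * S - D ^ 2 := sub_nonneg.mpr hCS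
      have := mul_nonneg hP.le h0
      rw [hq]
      linarith
    · calc (4 * c ^ 2 / π ^ 2) * P * H * ((q:ℝ) ^ (-(2:ℝ) / ((K:ℝ)-1) - 2 * δ)) ≤
          P * (H * (q:ℝ) - D ^ 2) := hmid
      _ = P * (H * S - D ^ 2) := by rw [hq]
      _ ≤ S + P * (H * S - D ^ 2) := by linarith
  refine ⟨part1, ?_⟩
  -- second part
  set B : ℝ := 1 + 2 / ((K:ℝ)-1) + 2 * δ with hBdef
  have hB1 : 1 < B := by
    have h2K : 0 < 2 / ((K:ℝ)-1) := by positivity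
    rw [hBdef]; linarith
  have hB0 : 0 < B := by linarith
  set α : ℝ := 1 / B with hαdef
  have hα0 : 0 < α := by positivity
  set M : ℝ := (4 * c ^ 2 / π ^ 2) * P * H with hMdef
  have hM0 : 0 < M := by rw [hMdef]; positivity
  have hQβ : (q:ℝ) ^ (-(2:ℝ) / ((K:ℝ)-1) - 2 * δ) = (q:ℝ) ^ (-(B - 1)) := by
    congr 1; rw [hBdef]; ring
  have hrw : ((4 * c ^ 2 / π ^ 2) * H) ^ α * P ^ α = M ^ α := by
    rw [← Real.mul_rpow (by positivity) hP.le, hMdef]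
    congr 1; ring
  rw [hrw]
  have hBα : B * α = 1 := by rw [hαdef]; field_simp
  have key2 : M ^ α ≤ max (q:ℝ) (M * (q:ℝ) ^ (-(2:ℝ) / ((K:ℝ)-1) - 2 * δ)) := by
    rcases le_or_gt M ((q:ℝ) ^ B) with hcase | hcase
    · apply le_max_of_le_left
      have h1 : M ^ α ≤ ((q:ℝ) ^ B) ^ α := Real.rpow_le_rpow hM0.le hcase hα0.le
      rwa [← Real.rpow_mul hqR.le, hBα, Real.rpow_one] at h1
    · apply le_max_of_le_right
      have hqM : (q:ℝ) ≤ M ^ α := by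
        have h1 : ((q:ℝ) ^ B) ^ α ≤ M ^ α :=
          Real.rpow_le_rpow (by positivity) hcase.le hα0.le
        rwa [← Real.rpow_mul hqR.le, hBα, Real.rpow_one] at h1
      have hβ0 : 0 < B - 1 := by linarith
      rw [hQβ, Real.rpow_neg hqR.le, ← div_eq_mul_inv,
        le_div_iff₀ (Real.rpow_pos_of_pos hqR _)]
      have h2 : (q:ℝ) ^ (B - 1) ≤ (M ^ α) ^ (B - 1) :=
        Real.rpow_le_rpow hqR.le hqM hβ0.le
      have h3 : M ^ α * (M ^ α) ^ (B - 1) = M := by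
        rw [← Real.rpow_mul hM0.le, ← Real.rpow_add hM0,
          show α + α * (B - 1) = B * α from by ring, hBα, Real.rpow_one]
      calc M ^ α * (q:ℝ) ^ (B - 1) ≤ M ^ α * (M ^ α) ^ (B - 1) :=
        mul_le_mul_of_nonneg_left h2 (Real.rpow_pos_of_pos hM0 _).le
      _ = M := h3
  exact key2.trans part1
end
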